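/- For every h > 0 and every y > 0, h²·∫_h^∞ du / (u³·√(y² + u²)) = (y·√(y² + h²) − h²·arcsinh(y/h)) / (2y³). -/

import Mathlib

open MeasureTheory

/-- For every `h > 0` and every `y > 0`,
`h²·∫_h^∞ du/(u³·√(y²+u²)) = (y·√(y²+h²) − h²·arcsinh(y/h))/(2y³)`. -/
theorem depth_integral_order_zero (h y : ℝ) (hh : 0 < h) (hy : 0 < y) :
    h ^ 2 * ∫ u in Set.Ioi h, 1 / (u ^ 3 * Real.sqrt (y ^ 2 + u ^ 2)) =
      (y * Real.sqrt (y ^ 2 + h ^ 2) - h ^ 2 * Real.arsinh (y / h)) / (2 * y ^ 3) := by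
  set F : ℝ → ℝ := fun u => -(Real.sqrt (y^2+u^2))/(2*y^2*u^2) + Real.arsinh (y/u)/(2*y^3)
    with hFdef
  have key : ∀ u : ℝ, 0 < u → HasDerivAt F (1/(u^3*Real.sqrt (y^2+u^2))) u := by
    intro u hu0
    have hs : 0 < y^2 + u^2 := by positivity
    have hsq : 0 < Real.sqrt (y^2+u^2) := Real.sqrt_pos.2 hs
    have hsqsq : Real.sqrt (y^2+u^2) ^ 2 = y^2 + u^2 := Real.sq_sqrt hs.le
    have d1 : HasDerivAt (fun u : ℝ => Real.sqrt (y^2+u^2)) (u / Real.sqrt (y^2+u^2)) u := by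
      have hinner : HasDerivAt (fun u : ℝ => y^2+u^2) (2*u) u := by
        simpa using ((hasDerivAt_pow 2 u).const_add (y^2))
      have := (Real.hasDerivAt_sqrt hs.ne').comp u hinner
      refine this.congr_deriv ?_
      field_simp
    have dden : HasDerivAt (fun u : ℝ => 2*y^2*u^2) (2*y^2*(2*u)) u := by
      simpa using (hasDerivAt_pow 2 u).const_mul (2*y^2)
    have d2 := d1.neg.div dden (by positivity)
    have hyu : HasDerivAt (fun u : ℝ => y/u) (-y/u^2) u := by
      simpa [div_eq_mul_inv, neg_div] using (hasDerivAt_inv hu0.ne').const_mul y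
    have d3 := ((Real.hasDerivAt_arsinh (y/u)).comp u hyu).div_const (2*y^3)
    have hsimp : Real.sqrt (1 + (y/u)^2) = Real.sqrt (y^2+u^2) / u := by
      rw [show (1 + (y/u)^2) = (y^2+u^2)/u^2 by field_simp; ring,
        Real.sqrt_div (by positivity), Real.sqrt_sq hu0.le]
    have dF := d2.add d3
    refine dF.congr_deriv ?_
    rw [hsimp]
    simp only [Pi.neg_apply]
    field_simp
    linear_combination 2 * hsqsq
  have hlim : Filter.Tendsto F Filter.atTop (nhds 0) := by
    have hinv : Filter.Tendsto (fun u : ℝ => u⁻¹) Filter.atTop (nhds 0) :=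
      tendsto_inv_atTop_zero
    have t0 : Filter.Tendsto (fun u : ℝ => y^2*(u⁻¹)^4 + (u⁻¹)^2) Filter.atTop (nhds 0) := by
      have := ((hinv.pow 4).const_mul (y^2)).add (hinv.pow 2)
      simpa using this
    have t1 : Filter.Tendsto (fun u : ℝ => Real.sqrt (y^2*(u⁻¹)^4 + (u⁻¹)^2))
        Filter.atTop (nhds 0) := by
      simpa using t0.sqrt
    have t2 : Filter.Tendsto (fun u : ℝ => Real.sqrt (y^2+u^2) / u^2) Filter.atTop (nhds 0) := by
      apply t1.congr'
      filter_upwards [Filter.eventually_gt_atTop (0:ℝ)] with u hu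
      have heq : y^2*(u⁻¹)^4 + (u⁻¹)^2 = (y^2+u^2)/(u^2)^2 := by field_simp
      rw [heq, Real.sqrt_div (by positivity), Real.sqrt_sq (by positivity)]
    have t3 : Filter.Tendsto (fun u : ℝ => Real.arsinh (y/u)) Filter.atTop (nhds 0) := by
      have hdiv : Filter.Tendsto (fun u : ℝ => y/u) Filter.atTop (nhds 0) :=
        Filter.Tendsto.div_atTop tendsto_const_nhds Filter.tendsto_id
      have := (Real.continuous_arsinh.tendsto 0).comp hdiv
      exact (by simpa using this : Filter.Tendsto (Real.arsinh ∘ fun u : ℝ => y / u) Filter.atTop (nhds 0))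
    have := ((t2.const_mul (-(1/(2*y^2)))).add (t3.div_const (2*y^3)))
    rw [hFdef]
    convert this using 2 with u
    · ring
    · ring
  have hint := integral_Ioi_of_hasDerivAt_of_nonneg
    (g := F) (g' := fun u => 1/(u^3*Real.sqrt (y^2+u^2))) (a := h)
    ((key h hh).continuousAt.continuousWithinAt)
    (fun u hu => key u (hh.trans hu))
    (fun u hu => by
      have hu0 : 0 < u := hh.trans hu
      positivity)
    hlim
  have hsq : 0 < Real.sqrt (y^2+h^2) := Real.sqrt_pos.2 (by positivity)
  rw [show (fun u : ℝ => 1 / (u ^ 3 * Real.sqrt (y ^ 2 + u ^ 2))) =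
      (fun u : ℝ => 1/(u^3*Real.sqrt (y^2+u^2))) from rfl] at *
  rw [hint, hFdef]
  field_simp
  ring
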